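/- arXiv:2011.02300 — 2 statements merged into one kernel-verified Lean document; each statement's English description precedes it below -/
import Mathlib

section
/- Let A > 0 and R > 0. For each n ∈ ℕ the function f(k_1) = (A/2) cos(2 k_1 R) e^{-2 k_1 R tan(2 k_1 R)} is strictly decreasing on the interval ((n-1)π/R, (4n-3)π/(4R)) intersected with (0,∞), where cos(2k_1 R) > 0; consequently the equation k_1 = f(k_1) has at most one solution in this interval. -/
open Real Set

/-- The function `f(k₁) = (A/2) cos(2k₁R) e^{-2k₁R tan(2k₁R)}`. -/
noncomputable def fRHS (A R k1 : ℝ) : ℝ :=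
  (A / 2) * Real.cos (2 * k1 * R) * Real.exp (-2 * k1 * R * Real.tan (2 * k1 * R))

/-- The interval `((n-1)π/R, (4n-3)π/(4R)) ∩ (0, ∞)`. -/
def Sint (R : ℝ) (n : ℕ) : Set ℝ :=
  Set.Ioo (((n : ℝ) - 1) * Real.pi / R) ((4 * (n : ℝ) - 3) * Real.pi / (4 * R)) ∩ Set.Ioi 0

/-- On the interval `((n-1)π/R, (4n-3)π/(4R)) ∩ (0,∞)` one has `cos(2k₁R) > 0`,
the function `f(k₁) = (A/2)cos(2k₁R)e^{-2k₁R tan(2k₁R)}` is strictly decreasing,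
and consequently the equation `k₁ = f(k₁)` has at most one solution there. -/
theorem fRHS_strictAnti_and_unique_fixed_point (A R : ℝ) (hA : 0 < A) (hR : 0 < R)
    (n : ℕ) (hn : 1 ≤ n) :
    (∀ k1 ∈ Sint R n, 0 < Real.cos (2 * k1 * R)) ∧
    StrictAntiOn (fRHS A R) (Sint R n) ∧
    Set.Subsingleton {k1 ∈ Sint R n | k1 = fRHS A R k1} := by
  have hπ := Real.pi_pos
  have hn1 : (1:ℝ) ≤ (n:ℝ) := by exact_mod_cast hn
  set c : ℝ := 2 * ((n:ℝ) - 1) * Real.pi with hc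
  have hc0 : 0 ≤ c := by rw [hc]; nlinarith
  have hmc : c = ((n:ℤ) - 1 : ℤ) * (2 * Real.pi) := by push_cast; ring
  have hcos_shift : ∀ θ : ℝ, Real.cos θ = Real.cos (θ - c) := by
    intro θ; rw [hmc]; exact (Real.cos_sub_int_mul_two_pi θ ((n:ℤ) - 1)).symm
  have htan_shift : ∀ θ : ℝ, Real.tan θ = Real.tan (θ - c) := by
    intro θ
    have h2 : θ - c = θ - (2 * ((n:ℤ) - 1) : ℤ) * Real.pi := by rw [hmc]; push_cast; ring
    rw [h2]; exact (Real.tan_periodic.sub_int_mul_eq (2 * ((n:ℤ) - 1))).symm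
  have hbound : ∀ x ∈ Sint R n, c < 2 * x * R ∧ 2 * x * R < c + Real.pi / 2 := by
    rintro x ⟨⟨h1, h2⟩, _⟩
    have e1 : ((n:ℝ) - 1) * Real.pi < x * R := (div_lt_iff₀ hR).mp h1
    have e2 : x * (4 * R) < (4 * (n:ℝ) - 3) * Real.pi := (lt_div_iff₀ (by positivity)).mp h2
    constructor
    · rw [hc]; nlinarith
    · rw [hc]; nlinarith
  have hcospos : ∀ x ∈ Sint R n, 0 < Real.cos (2 * x * R) := by
    intro x hx
    obtain ⟨h1, h2⟩ := hbound x hx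
    rw [hcos_shift]
    exact Real.cos_pos_of_mem_Ioo ⟨by linarith, by linarith⟩
  have hanti : StrictAntiOn (fRHS A R) (Sint R n) := by
    intro x hx y hy hxy
    obtain ⟨hx1, hx2⟩ := hbound x hx
    obtain ⟨hy1, hy2⟩ := hbound y hy
    have hRxy : 2 * x * R < 2 * y * R := by nlinarith
    have hdx : (0:ℝ) < 2 * x * R - c ∧ 2 * x * R - c < Real.pi / 2 := ⟨by linarith, by linarith⟩
    have hdy : (0:ℝ) < 2 * y * R - c ∧ 2 * y * R - c < Real.pi / 2 := ⟨by linarith, by linarith⟩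
    have hcx : 0 < Real.cos (2 * x * R) := hcospos x hx
    have hcy : 0 < Real.cos (2 * y * R) := hcospos y hy
    have hcoslt : Real.cos (2 * y * R) < Real.cos (2 * x * R) := by
      rw [hcos_shift (2 * x * R), hcos_shift (2 * y * R)]
      exact Real.strictAntiOn_cos ⟨le_of_lt hdx.1, by linarith [hdx.2]⟩
        ⟨le_of_lt hdy.1, by linarith [hdy.2]⟩ (by linarith)
    have htx : 0 < Real.tan (2 * x * R) := by
      rw [htan_shift]
      exact Real.tan_pos_of_pos_of_lt_pi_div_two hdx.1 hdx.2
    have htanlt : Real.tan (2 * x * R) < Real.tan (2 * y * R) := by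
      rw [htan_shift (2 * x * R), htan_shift (2 * y * R)]
      exact Real.strictMonoOn_tan ⟨by linarith [hdx.1], hdx.2⟩
        ⟨by linarith [hdy.1], hdy.2⟩ (by linarith)
    have hx0 : 0 < 2 * x * R := lt_of_le_of_lt hc0 hx1
    have hprod : 2 * x * R * Real.tan (2 * x * R) < 2 * y * R * Real.tan (2 * y * R) :=
      mul_lt_mul'' hRxy htanlt (le_of_lt hx0) (le_of_lt htx)
    have hexp : Real.exp (-2 * y * R * Real.tan (2 * y * R))
        < Real.exp (-2 * x * R * Real.tan (2 * x * R)) := by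
      apply Real.exp_lt_exp.mpr
      nlinarith [hprod]
    have hA2 : 0 < A / 2 := by linarith
    unfold fRHS
    exact mul_lt_mul'' (mul_lt_mul_of_pos_left hcoslt hA2) hexp (by positivity)
      (le_of_lt (Real.exp_pos _))
  refine ⟨hcospos, hanti, ?_⟩
  rintro x ⟨hxS, hxf⟩ y ⟨hyS, hyf⟩
  by_contra hne
  rcases lt_or_gt_of_ne hne with h | h
  · have h2 := hanti hxS hyS h
    rw [← hxf, ← hyf] at h2
    linarith
  · have h2 := hanti hyS hxS h
    rw [← hxf, ← hyf] at h2
    linarith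
end

section
/- Let ν : ℝ → ℂ and χ(k,ξ) be defined by ν(-ξ) = -(1/(2π)) ln|1 - r_1(-ξ) r_2(-ξ)| - (i/(2π)) ∫_{-∞}^{-ξ} d arg(1 - r_1(ζ) r_2(ζ)) and χ(k,ξ) = -(1/(2πi)) ∫_{-∞}^{-ξ} ln(k - ζ) d_ζ ln(1 - r_1(ζ) r_2(ζ)). If ln(1 - r_1 r_2) is C^1 on (-∞,-ξ] with derivative integrable and appropriate decay at -∞, then the Cauchy integral δ(k,ξ) = exp( (1/(2πi)) ∫_{-∞}^{-ξ} ln(1-r_1(ζ)r_2(ζ))/(ζ-k) dζ ) admits the representation δ(k,ξ) = (k+ξ)^{iν(-ξ)} e^{χ(k,ξ)} for k ∈ ℂ \ (-∞,-ξ]. -/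
open Complex MeasureTheory Filter Set

lemma not_integrableOn_inv_mul_log (M : ℝ) (hM : M ≤ -Real.exp 1) :
    ¬ IntegrableOn (fun x : ℝ => (|x| * Real.log |x|)⁻¹) (Set.Iic M) := by
  intro hI
  have he : (1:ℝ) < Real.exp 1 := by
    have := Real.add_one_lt_exp (x := 1) one_ne_zero; linarith
  have hM1 : (1:ℝ) < -M := lt_of_lt_of_le he (by linarith)
  set φ : ℝ → ℝ := fun x => (|x| * Real.log |x|)⁻¹ with hφ
  -- derivative facts
  have hG : ∀ x : ℝ, x ≤ M →
      HasDerivAt (fun y : ℝ => -Real.log (Real.log (-y))) (φ x) x := by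
    intro x hx
    have hx1 : (1:ℝ) < -x := lt_of_lt_of_le hM1 (by linarith)
    have hx0 : x < 0 := by linarith
    have h1 : HasDerivAt (fun y : ℝ => -y) (-1) x := (hasDerivAt_id x).neg
    have h2 : HasDerivAt (fun y : ℝ => Real.log (-y)) ((-x)⁻¹ * (-1)) x :=
      (Real.hasDerivAt_log (by linarith)).comp x h1
    have hlogpos : 0 < Real.log (-x) := Real.log_pos hx1
    have h3 : HasDerivAt (fun y : ℝ => Real.log (Real.log (-y)))
        ((Real.log (-x))⁻¹ * ((-x)⁻¹ * (-1))) x :=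
      by have := (Real.hasDerivAt_log hlogpos.ne').comp x h2; exact this
    have h4 : HasDerivAt (fun y : ℝ => -Real.log (Real.log (-y)))
        (-((Real.log (-x))⁻¹ * ((-x)⁻¹ * (-1)))) x := h3.neg
    convert h4 using 1
    rw [hφ]
    simp only [abs_of_neg hx0]
    field_simp
  -- FTC bound
  have key : ∀ t : ℝ, t ≤ M →
      Real.log (Real.log (-t)) - Real.log (Real.log (-M)) ≤ ∫ x in Set.Iic M, φ x := by
    intro t ht
    have hIInt : IntervalIntegrable φ volume t M := by
      rw [intervalIntegrable_iff_integrableOn_Ioc_of_le ht]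
      exact hI.mono_set (fun y hy => hy.2)
    have hFTC := intervalIntegral.integral_eq_sub_of_hasDerivAt
      (f := fun y : ℝ => -Real.log (Real.log (-y))) (f' := φ)
      (fun x hx => hG x (by
        rcases hx with hx
        have := hx.2
        rw [max_eq_right ht] at this
        exact this)) hIInt
    have hmono : ∫ x in Set.Ioc t M, φ x ≤ ∫ x in Set.Iic M, φ x := by
      apply setIntegral_mono_set hI ?_ (HasSubset.Subset.eventuallyLE (fun y hy => hy.2))
      rw [EventuallyLE, ae_restrict_iff' measurableSet_Iic]
      filter_upwards with y hy
      have hy1 : (1:ℝ) < -y := lt_of_lt_of_le hM1 (by exact neg_le_neg hy)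
      have : 0 < |y| * Real.log |y| := by
        have : |y| = -y := abs_of_neg (by linarith)
        rw [this]
        exact mul_pos (by linarith) (Real.log_pos hy1)
      positivity
    rw [intervalIntegral.integral_of_le ht] at hFTC
    rw [hFTC] at hmono
    linarith [hmono]
  -- contradiction
  have htop : Tendsto (fun t : ℝ => Real.log (Real.log (-t))) atBot atTop :=
    (Real.tendsto_log_atTop.comp Real.tendsto_log_atTop).comp tendsto_neg_atBot_atTop
  have := (htop.eventually_gt_atTop
    (Real.log (Real.log (-M)) + ∫ x in Set.Iic M, φ x)).and (eventually_le_atBot M)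
  obtain ⟨t, h1, h2⟩ := this.exists
  have := key t h2
  linarith

lemma norm_clog_le (z : ℂ) : ‖Complex.log z‖ ≤ |Real.log ‖z‖| + Real.pi := by
  calc ‖Complex.log z‖ ≤ |(Complex.log z).re| + |(Complex.log z).im| :=
        Complex.norm_le_abs_re_add_abs_im _
    _ ≤ |Real.log ‖z‖| + Real.pi := by
        rw [Complex.log_re, Complex.log_im]
        exact add_le_add le_rfl (Complex.abs_arg_le_pi z)


/-- Integration by parts in the Cauchy integral: with `L` a continuous branch of
`ln(1-r₁r₂)` that is `C¹`, vanishes at `-∞`, and has integrable derivative, the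
function `δ(k,ξ) = exp((1/2πi) ∫_{-∞}^{-ξ} L(ζ)/(ζ-k) dζ)` admits the representation
`δ(k,ξ) = (k+ξ)^{iν(-ξ)} e^{χ(k,ξ)}` with `ν(-ξ) = -L(-ξ)/(2π)` (which equals
`-(1/2π)ln|1-r₁r₂|(-ξ) - (i/2π)∫_{-∞}^{-ξ} d arg(1-r₁r₂)` for the normalized branch)
and `χ(k,ξ) = -(1/2πi) ∫_{-∞}^{-ξ} ln(k-ζ) dL(ζ)`. -/
theorem delta_singular_representation
    (r1 r2 : ℝ → ℂ) (ξ : ℝ) (L : ℝ → ℂ)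
    (hbranch : ∀ ζ : ℝ, Complex.exp (L ζ) = 1 - r1 ζ * r2 ζ)
    (hL : ContDiff ℝ 1 L)
    (hdecay : Tendsto L atBot (nhds 0))
    (hL'int : IntegrableOn (deriv L) (Set.Iic (-ξ)))
    (k : ℂ) (hk : ∀ t : ℝ, t ≤ -ξ → k ≠ (t : ℂ))
    (hint : IntegrableOn (fun ζ : ℝ => L ζ / ((ζ : ℂ) - k)) (Set.Iic (-ξ)))
    (hint2 : IntegrableOn (fun ζ : ℝ => Complex.log (k - (ζ : ℂ)) * deriv L ζ)
      (Set.Iic (-ξ))) :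
    Complex.exp ((1 / (2 * (Real.pi : ℂ) * Complex.I)) *
        ∫ ζ in Set.Iic (-ξ), L ζ / ((ζ : ℂ) - k)) =
      (k + (ξ : ℂ)) ^ (Complex.I * (-(L (-ξ)) / (2 * (Real.pi : ℂ)))) *
        Complex.exp (-(1 / (2 * (Real.pi : ℂ) * Complex.I)) *
          ∫ ζ in Set.Iic (-ξ), Complex.log (k - (ζ : ℂ)) * deriv L ζ) := by
  -- k - x lies in the slit plane for x ≤ -ξ
  have hslit : ∀ x : ℝ, x ≤ -ξ → k - (x : ℂ) ∈ Complex.slitPlane := by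
    intro x hx
    rcases eq_or_ne k.im 0 with him | him
    · left
      have hkre : k = ((k.re : ℝ) : ℂ) := by
        apply Complex.ext <;> simp [him]
      have : ¬ (k.re ≤ -ξ) := by
        intro h
        exact hk k.re h hkre
      simp only [Complex.sub_re, Complex.ofReal_re]
      linarith
    · right
      simpa using him
  have hne : ∀ x : ℝ, x ≤ -ξ → k - (x : ℂ) ≠ 0 := fun x hx =>
    Complex.slitPlane_ne_zero (hslit x hx)
  -- derivative of x ↦ log (k - x)
  have hΛ : ∀ x : ℝ, x ≤ -ξ →
      HasDerivAt (fun t : ℝ => Complex.log (k - (t : ℂ))) (1 / ((x : ℂ) - k)) x := by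
    intro x hx
    have h1 : HasDerivAt (fun t : ℝ => k - (t : ℂ)) (-1) x := by
      simpa using (Complex.ofRealCLM.hasDerivAt (x := x)).const_sub k
    have h2 := h1.clog_real (hslit x hx)
    have hxk : ((x : ℂ)) - k ≠ 0 := by
      intro h
      apply hne x hx
      rw [← neg_sub ((x : ℂ)) k, h, neg_zero]
    convert h2 using 1
    rw [div_eq_div_iff hxk (hne x hx)]
    ring
  set G : ℝ → ℂ := fun x => L x * Complex.log (k - (x : ℂ)) with hGdef
  set g' : ℝ → ℂ := fun x => Complex.log (k - (x : ℂ)) * deriv L x + L x / ((x : ℂ) - k)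
    with hg'def
  have hGd : ∀ x ∈ Set.Iic (-ξ), HasDerivAt G (g' x) x := by
    intro x hx
    have hLd : HasDerivAt L (deriv L x) x :=
      ((hL.differentiable (by norm_num)) x).hasDerivAt
    have : HasDerivAt (fun t : ℝ => L t * Complex.log (k - (t : ℂ)))
        (deriv L x * Complex.log (k - (x : ℂ)) + L x * (1 / ((x : ℂ) - k))) x :=
      hLd.mul (hΛ x hx)
    convert this using 1
    rw [mul_one_div, mul_comm]
  have hg'int : IntegrableOn g' (Set.Iic (-ξ)) := hint2.add hint
  have hlim : Tendsto G atBot (nhds (limUnder atBot G)) :=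
    tendsto_limUnder_of_hasDerivAt_of_integrableOn_Iic hGd hg'int
  set c : ℂ := limUnder atBot G with hcdef
  have hFTC : ∫ x in Set.Iic (-ξ), g' x = G (-ξ) - c :=
    integral_Iic_of_hasDerivAt_of_tendsto' hGd hg'int hlim
  -- the limit at -∞ vanishes
  have hc0 : c = 0 := by
    by_contra hc
    have hnormlim : Tendsto (fun x => ‖G x‖) atBot (nhds ‖c‖) := hlim.norm
    have hev : ∀ᶠ x in atBot, ‖c‖ / 2 < ‖G x‖ :=
      hnormlim.eventually_const_lt (by
        have : 0 < ‖c‖ := norm_pos_iff.mpr hc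
        linarith)
    obtain ⟨M₀, hM₀⟩ := eventually_atBot.mp hev
    set B : ℝ := Real.exp Real.pi + 2 * ‖k‖ + 2 with hBdef
    set M : ℝ := min (min M₀ (-ξ)) (-B) with hMdef
    have hMM₀ : M ≤ M₀ := le_trans (min_le_left _ _) (min_le_left _ _)
    have hMξ : M ≤ -ξ := le_trans (min_le_left _ _) (min_le_right _ _)
    have hMB : M ≤ -B := min_le_right _ _
    have hπ1 : (1:ℝ) ≤ Real.pi := by linarith [Real.pi_gt_three]
    -- pointwise lower bound for the integrand
    have hptwise : ∀ x : ℝ, x ≤ M →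
        (|x| * Real.log |x|)⁻¹ ≤ (12 / ‖c‖) * ‖L x / ((x : ℂ) - k)‖ := by
      intro x hx
      have hxB : B ≤ -x := by linarith [le_trans hx hMB]
      have hexpπ : (0:ℝ) < Real.exp Real.pi := Real.exp_pos _
      have habsk : (0:ℝ) ≤ ‖k‖ := norm_nonneg _
      have hx2 : (2:ℝ) ≤ -x := by
        have : (0:ℝ) < Real.exp Real.pi := hexpπ
        simp only [hBdef] at hxB; linarith
      have hx0 : x < 0 := by linarith
      have habs : |x| = -x := abs_of_neg hx0
      have hexpa : Real.exp Real.pi ≤ -x := by simp only [hBdef] at hxB; linarith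
      have hloga : Real.pi ≤ Real.log (-x) := by
        rw [← Real.log_exp Real.pi]
        exact Real.log_le_log hexpπ hexpa
      have hloga1 : (1:ℝ) ≤ Real.log (-x) := le_trans hπ1 hloga
      have hka : ‖k‖ ≤ (-x) / 2 - 1 := by
        simp only [hBdef] at hxB; linarith
      -- |k - x| bounds
      have habskx_up : ‖k - (x : ℂ)‖ ≤ 2 * (-x) := by
        calc ‖k - (x : ℂ)‖ ≤ ‖k‖ + ‖(x : ℂ)‖ :=
              norm_sub_le _ _
          _ = ‖k‖ + |x| := by rw [Complex.norm_real, Real.norm_eq_abs]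
          _ ≤ ((-x)/2 - 1) + (-x) := by rw [habs]; linarith
          _ ≤ 2 * (-x) := by linarith
      have habskx_lo : (2:ℝ) ≤ ‖k - (x : ℂ)‖ := by
        have h1 : ‖(x:ℂ)‖ - ‖k‖ ≤ ‖(x:ℂ) - k‖ := norm_sub_norm_le _ _
        rw [norm_sub_rev] at h1
        simp only [Complex.norm_real, Real.norm_eq_abs, habs] at h1
        linarith
      -- bound on the log factor
      have hlogbd : ‖Complex.log (k - (x : ℂ))‖ ≤ 3 * Real.log (-x) := by
        have h1 := norm_clog_le (k - (x : ℂ))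
        have h2 : |Real.log (‖k - (x : ℂ)‖)| = Real.log (‖k - (x:ℂ)‖) :=
          abs_of_nonneg (Real.log_nonneg (by linarith))
        have h3 : Real.log (‖k - (x : ℂ)‖) ≤ Real.log (2 * (-x)) :=
          Real.log_le_log (by linarith) habskx_up
        have h4 : Real.log (2 * (-x)) = Real.log 2 + Real.log (-x) :=
          Real.log_mul two_ne_zero (by linarith)
        have h5 : Real.log 2 ≤ 1 := by
          rw [← Real.log_exp 1]
          apply Real.log_le_log two_pos
          have := Real.add_one_lt_exp (x := 1) one_ne_zero
          linarith
        calc ‖Complex.log (k - (x : ℂ))‖ ≤ |Real.log (‖k - (x:ℂ)‖)| + Real.pi := h1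
          _ ≤ (Real.log 2 + Real.log (-x)) + Real.log (-x) := by
              rw [h2]; rw [h4] at h3; linarith
          _ ≤ 3 * Real.log (-x) := by linarith
      have hΛne : Complex.log (k - (x : ℂ)) ≠ 0 := by
        intro h0
        have h1 : k - (x : ℂ) = 1 := by
          have := Complex.exp_log (hne x (le_trans hx hMξ))
          rw [h0, Complex.exp_zero] at this
          exact this.symm
        rw [h1] at habskx_lo
        simp at habskx_lo
      have hGlb : ‖c‖ / 2 < ‖L x‖ * ‖Complex.log (k - (x : ℂ))‖ := by
        have := hM₀ x (le_trans hx hMM₀)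
        simpa [hGdef, norm_mul] using this
      have hΛpos : 0 < ‖Complex.log (k - (x : ℂ))‖ := norm_pos_iff.mpr hΛne
      have hLlb : ‖c‖ / 2 / (3 * Real.log (-x)) ≤ ‖L x‖ := by
        rw [div_le_iff₀ (by linarith)]
        calc ‖c‖ / 2 ≤ ‖L x‖ * ‖Complex.log (k - (x : ℂ))‖ := le_of_lt hGlb
          _ ≤ ‖L x‖ * (3 * Real.log (-x)) :=
              mul_le_mul_of_nonneg_left hlogbd (norm_nonneg _)
      have hnormxk : ‖(x : ℂ) - k‖ = ‖k - (x:ℂ)‖ := by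
        rw [norm_sub_rev]
      have hxkpos : (0:ℝ) < ‖(x : ℂ) - k‖ := by rw [hnormxk]; linarith
      have hdivlb : ‖c‖ / 2 / (3 * Real.log (-x)) / (2 * (-x)) ≤ ‖L x / ((x:ℂ) - k)‖ := by
        rw [norm_div]
        apply div_le_div₀ (norm_nonneg _) hLlb hxkpos
        rw [hnormxk]
        exact habskx_up
      -- now convert to the stated inequality
      have hcpos : (0:ℝ) < ‖c‖ := norm_pos_iff.mpr hc
      rw [habs]
      have hA : ‖c‖ / 2 / (3 * Real.log (-x)) / (2 * (-x)) =
          (‖c‖ / 12) * ((-x) * Real.log (-x))⁻¹ := by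
        field_simp
        ring
      rw [hA] at hdivlb
      rw [← mul_le_mul_iff_right₀ hcpos]
      calc ‖c‖ * ((-x) * Real.log (-x))⁻¹
          = 12 * ((‖c‖ / 12) * ((-x) * Real.log (-x))⁻¹) := by ring
        _ ≤ 12 * ‖L x / ((x:ℂ) - k)‖ := by linarith [hdivlb]
        _ = ‖c‖ * ((12 / ‖c‖) * ‖L x / ((x:ℂ) - k)‖) := by
              field_simp
    -- comparison gives integrability of the non-integrable function: contradiction
    have hMe : M ≤ -Real.exp 1 := by
      have h1 : Real.exp 1 ≤ Real.exp Real.pi := Real.exp_le_exp.mpr hπ1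
      have h2 : (0:ℝ) ≤ ‖k‖ := norm_nonneg _
      have : Real.exp 1 ≤ B := by simp only [hBdef]; linarith
      linarith [hMB]
    apply not_integrableOn_inv_mul_log M hMe
    have hbound : IntegrableOn (fun x : ℝ => (12 / ‖c‖) * ‖L x / ((x:ℂ) - k)‖)
        (Set.Iic M) :=
      ((hint.mono_set (Iic_subset_Iic.mpr hMξ)).norm.const_mul _)
    apply Integrable.mono' hbound
    · exact ((_root_.continuous_abs.measurable.mul
        (Real.measurable_log.comp _root_.continuous_abs.measurable)).inv).aestronglyMeasurable
    · rw [ae_restrict_iff' measurableSet_Iic]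
      filter_upwards with y hyM
      have h := hptwise y hyM
      have hy1 : (1:ℝ) < |y| := by
        have hxB : B ≤ -y := by linarith [le_trans hyM hMB]
        have : (0:ℝ) < Real.exp Real.pi := Real.exp_pos _
        have h2 : (0:ℝ) ≤ ‖k‖ := norm_nonneg _
        have hy0 : y < 0 := by simp only [hBdef] at hxB; nlinarith
        rw [abs_of_neg hy0]; simp only [hBdef] at hxB
        nlinarith [Real.add_one_lt_exp (x := Real.pi) (ne_of_gt (by linarith))]
      have hnn : (0:ℝ) ≤ (|y| * Real.log |y|)⁻¹ := by
        have := Real.log_pos hy1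
        positivity
      rw [Real.norm_eq_abs, _root_.abs_of_nonneg hnn]
      exact h
  rw [hc0, sub_zero] at hFTC
  have hadd : ∫ x in Set.Iic (-ξ), g' x
      = (∫ x in Set.Iic (-ξ), Complex.log (k - (x:ℂ)) * deriv L x)
        + ∫ x in Set.Iic (-ξ), L x / ((x:ℂ) - k) := integral_add hint2 hint
  have hsplit : ∫ x in Set.Iic (-ξ), L x / ((x:ℂ) - k)
      = G (-ξ) - ∫ x in Set.Iic (-ξ), Complex.log (k - (x:ℂ)) * deriv L x := by
    rw [hadd] at hFTC
    linear_combination hFTC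
  rw [hsplit]
  have hkξ : k + (ξ:ℂ) ≠ 0 := by
    intro h
    apply hk (-ξ) le_rfl
    push_cast
    linear_combination h
  rw [Complex.cpow_def_of_ne_zero hkξ, ← Complex.exp_add]
  have hGval : G (-ξ) = L (-ξ) * Complex.log (k + (ξ:ℂ)) := by
    simp only [hGdef]
    norm_num
  rw [hGval]
  have hπ : ((Real.pi : ℂ)) ≠ 0 := Complex.ofReal_ne_zero.mpr Real.pi_ne_zero
  have hkey : (1:ℂ) / (2*(Real.pi:ℂ)*Complex.I) = -Complex.I/(2*(Real.pi:ℂ)) := by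
    rw [div_eq_div_iff (by simp [hπ, Complex.I_ne_zero]) (by simp [hπ])]
    have : Complex.I * Complex.I = -1 := Complex.I_mul_I
    linear_combination (2*(Real.pi:ℂ)) * this
  rw [hkey]
  congr 1
  ring
end
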